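/- arXiv:1810.03392 — 2 statements merged into one kernel-verified Lean document; each statement's English description precedes it below -/
import Mathlib

section
/- Let (X, d_M) be a complete separable metric space, let F be a measurable space, and for each z ∈ F let P_z be a probability measure on a measurable space (Ω, G). Suppose (K_n)_{n∈ℕ} is a sequence of measurable maps K_n : Ω → X such that for every z ∈ F there exists a measurable K^z : Ω → X with K_n → K^z in probability P_z. Assume moreover that z ↦ P_z(A) is measurable for every A ∈ G. Then, defining n_0(z) = 0 and n_k(z) = inf{m > n_{k-1}(z) : sup_{p,q ≥ m} P_z(d_M(K_p, K_q) > 2^{−k}) < 2^{−k}}, each n_k is a measurable function of z, and setting L^z(ω) = lim_k K_{n_k(z)}(ω) when the limit exists and L^z(ω) = x₀ (a fixed point) otherwise, one has: for every z ∈ F, L^z = K^z, P_z-almost surely. -/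
open MeasureTheory Filter
open scoped ENNReal

lemma aux_sInf_eq_iff {Q : ℕ → Prop} {j : ℕ} :
    sInf {m | Q m} = j ↔ ((Q j ∧ ∀ i < j, ¬ Q i) ∨ (j = 0 ∧ ∀ i, ¬ Q i)) := by
  constructor
  · intro h
    by_cases hne : {m | Q m}.Nonempty
    · left
      have hmem := Nat.sInf_mem hne
      rw [h] at hmem
      refine ⟨hmem, fun i hij hi => ?_⟩
      exact absurd hi (Nat.notMem_of_lt_sInf (h ▸ hij))
    · right
      rw [Set.not_nonempty_iff_eq_empty] at hne
      refine ⟨?_, fun i hi => ?_⟩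
      · rw [← h, hne, Nat.sInf_empty]
      · exact (Set.eq_empty_iff_forall_notMem.mp hne i) hi
  · rintro (⟨hj, hlt⟩ | ⟨rfl, hall⟩)
    · refine le_antisymm (Nat.sInf_le hj) ?_
      by_contra hc
      push_neg at hc
      exact hlt _ hc (Nat.sInf_mem ⟨j, hj⟩)
    · have : {m | Q m} = ∅ := Set.eq_empty_iff_forall_notMem.2 hall
      rw [this, Nat.sInf_empty]

lemma measurable_sInf_setOf {F : Type*} [MeasurableSpace F] {Q : ℕ → F → Prop}
    (hQ : ∀ m, MeasurableSet {z | Q m z}) :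
    Measurable fun z => sInf {m | Q m z} := by
  apply measurable_to_countable'
  intro j
  by_cases hj : j = 0
  · subst hj
    have heq : (fun z => sInf {m | Q m z}) ⁻¹' {0} =
        {z | Q 0 z} ∪ ⋂ i, {z | Q i z}ᶜ := by
      ext z
      simp only [Set.mem_preimage, Set.mem_singleton_iff, aux_sInf_eq_iff, Set.mem_union,
        Set.mem_iInter, Set.mem_compl_iff, Set.mem_setOf_eq]
      constructor
      · rintro (⟨h, _⟩ | ⟨_, h⟩)
        · exact Or.inl h
        · exact Or.inr h
      · rintro (h | h)
        · exact Or.inl ⟨h, by omega⟩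
        · exact Or.inr ⟨trivial, h⟩
    rw [heq]
    exact (hQ 0).union (MeasurableSet.iInter fun i => (hQ i).compl)
  · have heq : (fun z => sInf {m | Q m z}) ⁻¹' {j} =
        {z | Q j z} ∩ ⋂ i, ⋂ (_ : i < j), {z | Q i z}ᶜ := by
      ext z
      simp only [Set.mem_preimage, Set.mem_singleton_iff, aux_sInf_eq_iff, Set.mem_inter_iff,
        Set.mem_iInter, Set.mem_compl_iff, Set.mem_setOf_eq, hj, false_and, or_false]
    rw [heq]
    exact (hQ j).inter (MeasurableSet.iInter fun i => MeasurableSet.iInter fun _ => (hQ i).compl)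

theorem stmt5 {X : Type*} [MetricSpace X] [CompleteSpace X] [TopologicalSpace.SeparableSpace X]
    [MeasurableSpace X] [BorelSpace X]
    {F : Type*} [MeasurableSpace F]
    {Ω : Type*} [MeasurableSpace Ω]
    (P : F → Measure Ω) (hP : ∀ z, IsProbabilityMeasure (P z))
    (hPmeas : ∀ A : Set Ω, MeasurableSet A → Measurable fun z => P z A)
    (K : ℕ → Ω → X) (hK : ∀ m, Measurable (K m))
    (Klim : F → Ω → X) (hKlim : ∀ z, Measurable (Klim z))
    (hconv : ∀ z, ∀ ε > (0 : ℝ),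
      Tendsto (fun m => P z {ω | ε < dist (K m ω) (Klim z ω)}) atTop (nhds 0))
    (n : ℕ → F → ℕ)
    (hn0 : ∀ z, n 0 z = 0)
    (hnk : ∀ k z, n (k + 1) z = sInf {m : ℕ | n k z < m ∧
      (⨆ (p : ℕ) (q : ℕ) (_ : m ≤ p) (_ : m ≤ q),
        P z {ω | (2 : ℝ)⁻¹ ^ (k + 1) < dist (K p ω) (K q ω)})
        < ENNReal.ofReal ((2 : ℝ)⁻¹ ^ (k + 1))})
    (x₀ : X) (L : F → Ω → X)
    (hL1 : ∀ z ω, (∃ x : X, Tendsto (fun k => K (n k z) ω) atTop (nhds x)) →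
      Tendsto (fun k => K (n k z) ω) atTop (nhds (L z ω)))
    (hL2 : ∀ z ω, ¬ (∃ x : X, Tendsto (fun k => K (n k z) ω) atTop (nhds x)) →
      L z ω = x₀) :
    (∀ k, Measurable fun z => n k z) ∧
    (∀ z, ∀ᵐ ω ∂(P z), L z ω = Klim z ω) := by
  have hεpos : ∀ k : ℕ, (0 : ℝ) < (2 : ℝ)⁻¹ ^ k := fun k => pow_pos (by norm_num) k
  -- measurability of the inner sets in Ω
  have hsetmeas : ∀ (c : ℝ) (p q : ℕ),
      MeasurableSet {ω | c < dist (K p ω) (K q ω)} := fun c p q =>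
    measurableSet_lt measurable_const ((hK p).dist (hK q))
  -- the supremum is measurable in z
  have hsupmeas : ∀ (c : ℝ) (m : ℕ), Measurable fun z =>
      ⨆ (p : ℕ) (q : ℕ) (_ : m ≤ p) (_ : m ≤ q),
        P z {ω | c < dist (K p ω) (K q ω)} := by
    intro c m
    refine Measurable.iSup fun p => Measurable.iSup fun q => ?_
    by_cases hp : m ≤ p
    · by_cases hq : m ≤ q
      · simpa [hp, hq] using hPmeas _ (hsetmeas c p q)
      · simp [hp, hq]
    · simp [hp]
  -- Part 1: measurability of n k
  have hmeas : ∀ k, Measurable fun z => n k z := by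
    intro k
    induction k with
    | zero =>
      have : (fun z => n 0 z) = fun _ => 0 := funext hn0
      rw [this]; exact measurable_const
    | succ k ih =>
      have heq : (fun z => n (k + 1) z) = fun z => sInf {m : ℕ | n k z < m ∧
          (⨆ (p : ℕ) (q : ℕ) (_ : m ≤ p) (_ : m ≤ q),
            P z {ω | (2 : ℝ)⁻¹ ^ (k + 1) < dist (K p ω) (K q ω)})
            < ENNReal.ofReal ((2 : ℝ)⁻¹ ^ (k + 1))} := funext (hnk k)
      rw [heq]
      refine measurable_sInf_setOf fun m => ?_
      have h1 : MeasurableSet {z | n k z < m} := ih measurableSet_Iio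
      have h2 : MeasurableSet {z |
          (⨆ (p : ℕ) (q : ℕ) (_ : m ≤ p) (_ : m ≤ q),
            P z {ω | (2 : ℝ)⁻¹ ^ (k + 1) < dist (K p ω) (K q ω)})
            < ENNReal.ofReal ((2 : ℝ)⁻¹ ^ (k + 1))} :=
        hsupmeas _ m measurableSet_Iio
      exact h1.inter h2
  refine ⟨hmeas, fun z => ?_⟩
  -- Part 2
  haveI := hP z
  set ε : ℕ → ℝ := fun k => (2 : ℝ)⁻¹ ^ k with hε
  -- Step A: n (k+1) z belongs to the defining set
  have hA : ∀ k, n k z < n (k + 1) z ∧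
      (⨆ (p : ℕ) (q : ℕ) (_ : n (k + 1) z ≤ p) (_ : n (k + 1) z ≤ q),
        P z {ω | ε (k + 1) < dist (K p ω) (K q ω)})
        < ENNReal.ofReal (ε (k + 1)) := by
    intro k
    have hne : {m : ℕ | n k z < m ∧
        (⨆ (p : ℕ) (q : ℕ) (_ : m ≤ p) (_ : m ≤ q),
          P z {ω | ε (k + 1) < dist (K p ω) (K q ω)})
          < ENNReal.ofReal (ε (k + 1))}.Nonempty := by
      have h4pos : (0 : ℝ≥0∞) < ENNReal.ofReal (ε (k + 1) / 4) :=
        ENNReal.ofReal_pos.mpr (by positivity)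
      have hev := (hconv z (ε (k + 1) / 2) (by positivity)).eventually_lt_const h4pos
      obtain ⟨M, hM⟩ := hev.exists_forall_of_atTop
      refine ⟨max (n k z + 1) M, lt_of_lt_of_le (Nat.lt_succ_self _) (le_max_left _ _), ?_⟩
      have hbound : ∀ p q : ℕ, max (n k z + 1) M ≤ p → max (n k z + 1) M ≤ q →
          P z {ω | ε (k + 1) < dist (K p ω) (K q ω)} ≤ ENNReal.ofReal (ε (k + 1) / 2) := by
        intro p q hp hq
        have hsub : {ω | ε (k + 1) < dist (K p ω) (K q ω)} ⊆
            {ω | ε (k + 1) / 2 < dist (K p ω) (Klim z ω)} ∪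
            {ω | ε (k + 1) / 2 < dist (K q ω) (Klim z ω)} := by
          intro ω hω
          by_contra hc
          simp only [Set.mem_union, Set.mem_setOf_eq, not_or, not_lt] at hc
          have := dist_triangle_right (K p ω) (K q ω) (Klim z ω)
          simp only [Set.mem_setOf_eq] at hω
          linarith [hc.1, hc.2]
        calc P z {ω | ε (k + 1) < dist (K p ω) (K q ω)}
            ≤ P z ({ω | ε (k + 1) / 2 < dist (K p ω) (Klim z ω)} ∪
              {ω | ε (k + 1) / 2 < dist (K q ω) (Klim z ω)}) := measure_mono hsub
          _ ≤ P z {ω | ε (k + 1) / 2 < dist (K p ω) (Klim z ω)} +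
              P z {ω | ε (k + 1) / 2 < dist (K q ω) (Klim z ω)} := measure_union_le _ _
          _ ≤ ENNReal.ofReal (ε (k + 1) / 4) + ENNReal.ofReal (ε (k + 1) / 4) := by
              exact add_le_add (hM p (le_trans (le_max_right _ _) hp)).le
                (hM q (le_trans (le_max_right _ _) hq)).le
          _ = ENNReal.ofReal (ε (k + 1) / 2) := by
              rw [← ENNReal.ofReal_add (by positivity) (by positivity)]
              ring_nf
      have hhalf : ENNReal.ofReal (ε (k + 1) / 2) < ENNReal.ofReal (ε (k + 1)) := by
        rw [ENNReal.ofReal_lt_ofReal_iff (hεpos (k + 1))]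
        show ε (k + 1) / 2 < ε (k + 1)
        have h : (0:ℝ) < ε (k + 1) := hεpos (k + 1)
        linarith
      refine lt_of_le_of_lt ?_ hhalf
      exact iSup_le fun p => iSup_le fun q => iSup_le fun hp => iSup_le fun hq =>
        hbound p q hp hq
    have hmem := Nat.sInf_mem hne
    rw [← hnk k z] at hmem
    exact hmem
  have hsup : ∀ k, ∀ p q : ℕ, n (k + 1) z ≤ p → n (k + 1) z ≤ q →
      P z {ω | ε (k + 1) < dist (K p ω) (K q ω)} < ENNReal.ofReal (ε (k + 1)) := by
    intro k p q hp hq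
    refine lt_of_le_of_lt ?_ (hA k).2
    exact le_iSup_of_le p (le_iSup_of_le q (le_iSup_of_le hp (le_iSup_of_le hq le_rfl)))
  -- choose M k from convergence in probability
  have hMex : ∀ k : ℕ, ∃ M : ℕ, ∀ m ≥ M,
      P z {ω | ε (k + 1) < dist (K m ω) (Klim z ω)} < ENNReal.ofReal (ε (k + 1)) := by
    intro k
    exact ((hconv z (ε (k + 1)) (hεpos (k + 1))).eventually_lt_const
      (ENNReal.ofReal_pos.mpr (hεpos (k + 1)))).exists_forall_of_atTop
  choose M hM using hMex
  set r : ℕ → ℕ := fun k => max (n (k + 1) z) (M k) with hr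
  set C : ℕ → Set Ω := fun k => {ω | ε (k + 1) < dist (K (n (k + 1) z) ω) (K (r k) ω)} with hC
  set D : ℕ → Set Ω := fun k => {ω | ε (k + 1) < dist (K (r k) ω) (Klim z ω)} with hD
  have hCle : ∀ k, P z (C k) ≤ ENNReal.ofReal (ε (k + 1)) :=
    fun k => (hsup k _ _ le_rfl (le_max_left _ _)).le
  have hDle : ∀ k, P z (D k) ≤ ENNReal.ofReal (ε (k + 1)) :=
    fun k => (hM k (r k) (le_max_right _ _)).le
  -- summability
  have hgeo : Summable fun k : ℕ => ε (k + 1) := by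
    have h2 : Summable fun k : ℕ => (2 : ℝ)⁻¹ ^ k :=
      summable_geometric_of_lt_one (by norm_num) (by norm_num)
    exact (summable_nat_add_iff 1).mpr h2
  have htsum : (∑' k, ENNReal.ofReal (ε (k + 1))) ≠ ⊤ := by
    rw [← ENNReal.ofReal_tsum_of_nonneg (fun k => (hεpos (k + 1)).le) hgeo]
    exact ENNReal.ofReal_ne_top
  have hsum : (∑' k, P z (C k ∪ D k)) ≠ ⊤ := by
    refine ne_top_of_le_ne_top ?_ (Summable.tsum_le_tsum (f := fun k => P z (C k ∪ D k))
      (g := fun k => ENNReal.ofReal (ε (k + 1)) + ENNReal.ofReal (ε (k + 1)))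
      (fun k => le_trans (measure_union_le _ _) (add_le_add (hCle k) (hDle k)))
      ENNReal.summable ENNReal.summable)
    rw [ENNReal.tsum_add]
    exact ENNReal.add_ne_top.mpr ⟨htsum, htsum⟩
  have hae := MeasureTheory.ae_finite_setOf_mem (μ := P z) (s := fun k => C k ∪ D k) hsum
  filter_upwards [hae] with ω hω
  -- from finiteness, eventual bounds
  obtain ⟨N, hN⟩ : ∃ N, ∀ k ≥ N, ω ∉ C k ∪ D k := by
    rcases hω.bddAbove with ⟨N, hNb⟩
    exact ⟨N + 1, fun k hk hmem => by
      have := hNb hmem; omega⟩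
  have hdist : ∀ k ≥ N, dist (K (n (k + 1) z) ω) (Klim z ω) ≤ ε k := by
    intro k hk
    have hmem := hN k hk
    simp only [Set.mem_union, hC, hD, Set.mem_setOf_eq, not_or, not_lt] at hmem
    calc dist (K (n (k + 1) z) ω) (Klim z ω)
        ≤ dist (K (n (k + 1) z) ω) (K (r k) ω) + dist (K (r k) ω) (Klim z ω) :=
          dist_triangle _ _ _
      _ ≤ ε (k + 1) + ε (k + 1) := add_le_add hmem.1 hmem.2
      _ = ε k := by
          simp only [hε, pow_succ]
          ring
  -- tendsto
  have htend0 : Tendsto (fun k => dist (K (n (k + 1) z) ω) (Klim z ω)) atTop (nhds 0) := by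
    refine squeeze_zero' (Eventually.of_forall fun _ => dist_nonneg)
      (eventually_atTop.mpr ⟨N, hdist⟩) ?_
    exact tendsto_pow_atTop_nhds_zero_of_lt_one (by norm_num) (by norm_num)
  have htend1 : Tendsto (fun k => K (n (k + 1) z) ω) atTop (nhds (Klim z ω)) :=
    tendsto_iff_dist_tendsto_zero.mpr htend0
  have htend : Tendsto (fun k => K (n k z) ω) atTop (nhds (Klim z ω)) :=
    (tendsto_add_atTop_iff_nat 1).mp htend1
  exact tendsto_nhds_unique (hL1 z ω ⟨Klim z ω, htend⟩) htend
end

section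
/- Let ρ(x) = (1+|x|²)^{−α} for some α > d/2, so that ∫_{ℝ^d} ρ(x) dx < ∞. Suppose p : ℝ^d × ℝ^d → [0,∞) satisfies the two-sided Gaussian (Aronson) bounds c₁ t^{−d/2} exp(−C₁|x−y|²/t) ≤ p_t(x,y) ≤ c₂ t^{−d/2} exp(−C₂|x−y|²/t) for some positive constants c₁, c₂, C₁, C₂ and fixed t > 0. Then there exist constants 0 < c ≤ C depending only on c₁, c₂, C₁, C₂, α, d, T such that for every nonnegative measurable ψ : ℝ^d → [0,∞) and t ∈ (0,T], c ∫_{ℝ^d} ψ(y) ρ(y) dy ≤ ∫_{ℝ^d} ∫_{ℝ^d} ψ(y) p_t(x,y) ρ(x) dy dx ≤ C ∫_{ℝ^d} ψ(y) ρ(y) dy. -/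
open MeasureTheory Set Real Metric


section aux
variable {d : ℕ}
local notation "E" => EuclideanSpace ℝ (Fin d)

lemma poly_le_exp {α c : ℝ} (hα : 0 < α) (hc : 0 < c) :
    ∃ K : ℝ, 0 < K ∧ ∀ s : ℝ, 0 ≤ s → (1 + s) ^ α ≤ K * Real.exp (c * s) := by
  set ε : ℝ := min 1 (c / α) with hεdef
  have hε0 : 0 < ε := lt_min one_pos (by positivity)
  have hε1 : ε ≤ 1 := min_le_left _ _
  have hεα : ε * α ≤ c := by
    have h := min_le_right 1 (c / α)
    calc ε * α ≤ (c / α) * α := by nlinarith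
      _ = c := div_mul_cancel₀ _ hα.ne'
  refine ⟨ε ^ (-α), Real.rpow_pos_of_pos hε0 _, fun s hs => ?_⟩
  have h1 : 1 + s ≤ ε⁻¹ * Real.exp (ε * s) := by
    have h2 : ε * s + 1 ≤ Real.exp (ε * s) := Real.add_one_le_exp _
    rw [← mul_le_mul_iff_right₀ hε0, ← mul_assoc, mul_inv_cancel₀ hε0.ne', one_mul]
    nlinarith
  have h3 : (1 + s) ^ α ≤ (ε⁻¹ * Real.exp (ε * s)) ^ α :=
    Real.rpow_le_rpow (by linarith) h1 hα.le
  refine h3.trans ?_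
  rw [Real.mul_rpow (by positivity) (Real.exp_pos _).le, Real.inv_rpow hε0.le,
    ← Real.rpow_neg hε0.le, ← Real.exp_mul]
  have : Real.exp (ε * s * α) ≤ Real.exp (c * s) := by
    apply Real.exp_le_exp.mpr
    calc ε * s * α = (ε * α) * s := by ring
      _ ≤ c * s := by nlinarith
  nlinarith [Real.rpow_pos_of_pos hε0 (-α)]

lemma peetre {α : ℝ} (hα : 0 < α) (x y : E) :
    (1 + ‖x‖ ^ 2) ^ (-α) ≤ (2 * (1 + ‖x - y‖ ^ 2)) ^ α * (1 + ‖y‖ ^ 2) ^ (-α) := by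
  have hy : ‖y‖ ≤ ‖x‖ + ‖x - y‖ := by
    calc ‖y‖ = ‖x - (x - y)‖ := by rw [sub_sub_cancel]
      _ ≤ ‖x‖ + ‖x - y‖ := norm_sub_le _ _
  have hB : (0:ℝ) < 2 * (1 + ‖x - y‖ ^ 2) := by positivity
  have hA : (0:ℝ) < 1 + ‖y‖ ^ 2 := by positivity
  have key : 1 + ‖y‖ ^ 2 ≤ (2 * (1 + ‖x - y‖ ^ 2)) * (1 + ‖x‖ ^ 2) := by
    nlinarith [sq_nonneg (‖x‖ - ‖x - y‖), norm_nonneg y, norm_nonneg x, norm_nonneg (x - y),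
      sq_nonneg (‖x‖ * ‖x - y‖)]
  have h2 : (1 + ‖y‖ ^ 2) / (2 * (1 + ‖x - y‖ ^ 2)) ≤ 1 + ‖x‖ ^ 2 := by
    rw [div_le_iff₀ hB]
    linarith [key]
  have h3 : (1 + ‖x‖ ^ 2) ^ (-α) ≤ ((1 + ‖y‖ ^ 2) / (2 * (1 + ‖x - y‖ ^ 2))) ^ (-α) :=
    Real.rpow_le_rpow_of_nonpos (by positivity) h2 (by linarith)
  refine h3.trans_eq ?_
  rw [Real.div_rpow hA.le hB.le, Real.rpow_neg hB.le, div_eq_mul_inv, inv_inv, mul_comm]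

lemma rho_near {α T' : ℝ} (hα : 0 < α) (hT : 0 ≤ T') {x y : E} (h : ‖x - y‖ ≤ Real.sqrt T') :
    (2 + 2 * T') ^ (-α) * (1 + ‖y‖ ^ 2) ^ (-α) ≤ (1 + ‖x‖ ^ 2) ^ (-α) := by
  have hx : ‖x‖ ≤ ‖y‖ + Real.sqrt T' := by
    calc ‖x‖ = ‖y + (x - y)‖ := by congr 1; abel
      _ ≤ ‖y‖ + ‖x - y‖ := norm_add_le _ _
      _ ≤ ‖y‖ + Real.sqrt T' := by linarith
  have hsq : Real.sqrt T' ^ 2 = T' := Real.sq_sqrt hT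
  have key : 1 + ‖x‖ ^ 2 ≤ (2 + 2 * T') * (1 + ‖y‖ ^ 2) := by
    nlinarith [sq_nonneg (‖y‖ - Real.sqrt T'), norm_nonneg x, norm_nonneg y,
      Real.sqrt_nonneg T', sq_nonneg (‖y‖ * Real.sqrt T')]
  have h3 : ((2 + 2 * T') * (1 + ‖y‖ ^ 2)) ^ (-α) ≤ (1 + ‖x‖ ^ 2) ^ (-α) :=
    Real.rpow_le_rpow_of_nonpos (by positivity) key (by linarith)
  refine le_trans (le_of_eq ?_) h3
  rw [Real.mul_rpow (by positivity) (by positivity)]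

end aux


section aux2
variable {d : ℕ}
local notation "E" => EuclideanSpace ℝ (Fin d)

lemma integrable_gauss {b : ℝ} (hb : 0 < b) :
    Integrable (fun v : E => Real.exp (-b * ‖v‖ ^ 2)) := by
  have h := (GaussianFourier.integrable_cexp_neg_mul_sq_norm_add
    (V := E) (b := (b : ℂ)) (by simpa using hb) 0 (0 : E)).norm
  refine h.congr (Filter.Eventually.of_forall fun v => ?_)
  simp [Complex.norm_exp, ← Complex.ofReal_pow]

lemma gauss_lintegral {b : ℝ} (hb : 0 < b) (y : E) :
    ∫⁻ x : E, ENNReal.ofReal (Real.exp (-b * ‖x - y‖ ^ 2))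
      = ENNReal.ofReal ((π / b) ^ ((d : ℝ) / 2)) := by
  rw [lintegral_sub_right_eq_self (fun x : E => ENNReal.ofReal (Real.exp (-b * ‖x‖ ^ 2))) y]
  rw [← ofReal_integral_eq_lintegral_ofReal (integrable_gauss hb)
    (Filter.Eventually.of_forall fun x => (Real.exp_pos _).le)]
  rw [GaussianFourier.integral_rexp_neg_mul_sq_norm hb]
  norm_num [finrank_euclideanSpace_fin]

end aux2

section aux3
variable {d : ℕ}
local notation "E" => EuclideanSpace ℝ (Fin d)

lemma sqrt_pow_nat {t : ℝ} (ht : 0 < t) : Real.sqrt t ^ d = t ^ ((d : ℝ) / 2) := by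
  rw [Real.sqrt_eq_rpow, ← Real.rpow_natCast (t ^ ((1:ℝ)/2)) d, ← Real.rpow_mul ht.le]
  congr 1
  push_cast
  ring

lemma kernel_lower {α T c₁ C₁ : ℝ} (hα : 0 < α) (hT : 0 < T) (hc₁ : 0 < c₁) (hC₁ : 0 < C₁)
    {t : ℝ} (ht : t ∈ Ioc (0:ℝ) T) {q : E → E → ℝ} (hqm : Measurable (Function.uncurry q))
    (hq : ∀ x z, c₁ * t ^ (-(d:ℝ)/2) * Real.exp (-C₁ * ‖x - z‖ ^ 2 / t) ≤ q x z) (y : E) :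
    ENNReal.ofReal ((c₁ * Real.exp (-C₁) * (2 + 2*T) ^ (-α)
        * (volume (ball (0:E) 1)).toReal) * (1 + ‖y‖ ^ 2) ^ (-α))
      ≤ ∫⁻ x, ENNReal.ofReal (q x y * (1 + ‖x‖ ^ 2) ^ (-α)) := by
  obtain ⟨ht0, htT⟩ := ht
  set κ : ℝ := c₁ * t ^ (-(d:ℝ)/2) * Real.exp (-C₁) * ((2 + 2*T) ^ (-α) * (1 + ‖y‖ ^ 2) ^ (-α))
    with hκdef
  have hκ0 : 0 ≤ κ := by positivity
  have hmeas : Measurable fun x : E => ENNReal.ofReal (q x y * (1 + ‖x‖ ^ 2) ^ (-α)) := by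
    apply Measurable.ennreal_ofReal
    apply Measurable.mul (hqm.comp measurable_prodMk_right)
    exact ((continuous_const.add (continuous_norm.pow 2)).rpow_const
      (fun x => Or.inl (by positivity : (1 + ‖x‖ ^ 2 : ℝ) ≠ 0))).measurable
  have hpt : ∀ x ∈ ball y (Real.sqrt t), ENNReal.ofReal κ
      ≤ ENNReal.ofReal (q x y * (1 + ‖x‖ ^ 2) ^ (-α)) := by
    intro x hx
    apply ENNReal.ofReal_le_ofReal
    have hxy : ‖x - y‖ ≤ Real.sqrt t := by
      have := mem_ball_iff_norm.mp hx
      linarith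
    have hxy2 : ‖x - y‖ ^ 2 ≤ t := by
      nlinarith [Real.sq_sqrt ht0.le, Real.sqrt_nonneg t, norm_nonneg (x - y)]
    have hexp : Real.exp (-C₁) ≤ Real.exp (-C₁ * ‖x - y‖ ^ 2 / t) := by
      apply Real.exp_le_exp.mpr
      rw [neg_mul, neg_div, neg_le_neg_iff]
      rw [div_le_iff₀ ht0]
      nlinarith [norm_nonneg (x - y)]
    have hρ : (2 + 2*T) ^ (-α) * (1 + ‖y‖ ^ 2) ^ (-α) ≤ (1 + ‖x‖ ^ 2) ^ (-α) :=
      rho_near hα hT.le (hxy.trans (Real.sqrt_le_sqrt htT))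
    calc κ ≤ (c₁ * t ^ (-(d:ℝ)/2) * Real.exp (-C₁ * ‖x - y‖ ^ 2 / t)) * ((1 + ‖x‖ ^ 2) ^ (-α)) := by
          rw [hκdef]
          have h5 : 0 < c₁ * t ^ (-(d:ℝ)/2) := mul_pos hc₁ (Real.rpow_pos_of_pos ht0 _)
          apply mul_le_mul (mul_le_mul_of_nonneg_left hexp h5.le) hρ
            (by positivity) (by positivity)
      _ ≤ q x y * (1 + ‖x‖ ^ 2) ^ (-α) :=
          mul_le_mul_of_nonneg_right (hq x y) (by positivity)
  have hball : ENNReal.ofReal κ * volume (ball y (Real.sqrt t))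
      ≤ ∫⁻ x, ENNReal.ofReal (q x y * (1 + ‖x‖ ^ 2) ^ (-α)) := by
    calc ENNReal.ofReal κ * volume (ball y (Real.sqrt t))
        = ∫⁻ _ in ball y (Real.sqrt t), ENNReal.ofReal κ := (setLIntegral_const _ _).symm
      _ ≤ ∫⁻ x in ball y (Real.sqrt t), ENNReal.ofReal (q x y * (1 + ‖x‖ ^ 2) ^ (-α)) :=
          setLIntegral_mono hmeas hpt
      _ ≤ ∫⁻ x, ENNReal.ofReal (q x y * (1 + ‖x‖ ^ 2) ^ (-α)) :=
          setLIntegral_le_lintegral _ _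
  set vB : ℝ := (volume (ball (0:E) 1)).toReal with hvBdef
  have hvol : volume (ball (0:E) 1) = ENNReal.ofReal vB :=
    (ENNReal.ofReal_toReal measure_ball_lt_top.ne).symm
  refine le_trans (le_of_eq ?_) hball
  rw [Measure.addHaar_ball_of_pos _ y (Real.sqrt_pos.mpr ht0), finrank_euclideanSpace_fin,
    sqrt_pow_nat ht0, hvol, ← ENNReal.ofReal_mul (Real.rpow_nonneg ht0.le _),
    ← ENNReal.ofReal_mul hκ0]
  congr 1
  have hpow : t ^ (-(d:ℝ)/2) * t ^ ((d:ℝ)/2) = 1 := by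
    rw [← Real.rpow_add ht0, show (-(d:ℝ)/2 + (d:ℝ)/2) = 0 by ring, Real.rpow_zero]
  rw [hκdef]
  linear_combination (-(c₁ * Real.exp (-C₁) * ((2+2*T) ^ (-α) * (1+‖y‖^2) ^ (-α)) * vB)) * hpow
end aux3
section aux4
variable {d : ℕ}
local notation "E" => EuclideanSpace ℝ (Fin d)

lemma kernel_upper {α T c₂ C₂ : ℝ} (hα : 0 < α) (hT : 0 < T) (hc₂ : 0 < c₂)
    (hC₂ : 0 < C₂) :
    ∃ CU : ℝ, 0 < CU ∧ ∀ {t : ℝ}, t ∈ Ioc (0:ℝ) T →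
      ∀ q : E → E → ℝ,
      (∀ x z, q x z ≤ c₂ * t ^ (-(d:ℝ)/2) * Real.exp (-C₂ * ‖x - z‖ ^ 2 / t)) → ∀ y : E,
      ∫⁻ x, ENNReal.ofReal (q x y * (1 + ‖x‖ ^ 2) ^ (-α))
        ≤ ENNReal.ofReal (CU * (1 + ‖y‖ ^ 2) ^ (-α)) := by
  obtain ⟨K, hK, hKle⟩ := poly_le_exp hα (show (0:ℝ) < C₂ / (2 * T) by positivity)
  refine ⟨c₂ * 2 ^ α * K * (π / (C₂ / 2)) ^ ((d:ℝ)/2), by positivity, ?_⟩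
  rintro t ⟨ht0, htT⟩ q hq y
  set b : ℝ := C₂ / (2 * t) with hbdef
  have hb : 0 < b := by positivity
  set A : ℝ := c₂ * 2 ^ α * K * (1 + ‖y‖ ^ 2) ^ (-α) with hAdef
  have hA0 : 0 ≤ A := by positivity
  have hpt : ∀ x : E, q x y * (1 + ‖x‖ ^ 2) ^ (-α)
      ≤ A * t ^ (-(d:ℝ)/2) * Real.exp (-b * ‖x - y‖ ^ 2) := by
    intro x
    set s : ℝ := ‖x - y‖ ^ 2 with hsdef
    have hs : 0 ≤ s := sq_nonneg _
    have h1 : q x y * (1 + ‖x‖ ^ 2) ^ (-α)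
        ≤ (c₂ * t ^ (-(d:ℝ)/2) * Real.exp (-C₂ * s / t))
          * ((2 * (1 + s)) ^ α * (1 + ‖y‖ ^ 2) ^ (-α)) := by
      apply mul_le_mul (hq x y) (peetre hα x y) (by positivity)
      have := mul_pos hc₂ (Real.rpow_pos_of_pos ht0 (-(d:ℝ)/2))
      positivity
    refine h1.trans ?_
    have h2 : (2 * (1 + s)) ^ α = 2 ^ α * (1 + s) ^ α :=
      Real.mul_rpow (by norm_num) (by linarith)
    have h3 : (1 + s) ^ α * Real.exp (-C₂ * s / t) ≤ K * Real.exp (-b * s) := by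
      have h4 : (1 + s) ^ α ≤ K * Real.exp (C₂ / (2 * T) * s) := hKle s hs
      have h5 : Real.exp (C₂ / (2 * T) * s) * Real.exp (-C₂ * s / t) ≤ Real.exp (-b * s) := by
        rw [← Real.exp_add, Real.exp_le_exp]
        have h6 : C₂ * s / (2 * T) ≤ C₂ * s / (2 * t) := by
          gcongr
        have h7 : C₂ / (2 * T) * s = C₂ * s / (2 * T) := by ring
        have h8 : -C₂ * s / t = -(C₂ * s / (2 * t)) - C₂ * s / (2 * t) := by ring
        have h9 : -b * s = -(C₂ * s / (2 * t)) := by rw [hbdef]; ring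
        linarith
      calc (1 + s) ^ α * Real.exp (-C₂ * s / t)
          ≤ (K * Real.exp (C₂ / (2 * T) * s)) * Real.exp (-C₂ * s / t) :=
            mul_le_mul_of_nonneg_right h4 (Real.exp_pos _).le
        _ = K * (Real.exp (C₂ / (2 * T) * s) * Real.exp (-C₂ * s / t)) := by ring
        _ ≤ K * Real.exp (-b * s) := mul_le_mul_of_nonneg_left h5 hK.le
    calc (c₂ * t ^ (-(d:ℝ)/2) * Real.exp (-C₂ * s / t))
          * ((2 * (1 + s)) ^ α * (1 + ‖y‖ ^ 2) ^ (-α))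
        = (c₂ * t ^ (-(d:ℝ)/2) * 2 ^ α * (1 + ‖y‖ ^ 2) ^ (-α))
          * ((1 + s) ^ α * Real.exp (-C₂ * s / t)) := by rw [h2]; ring
      _ ≤ (c₂ * t ^ (-(d:ℝ)/2) * 2 ^ α * (1 + ‖y‖ ^ 2) ^ (-α)) * (K * Real.exp (-b * s)) := by
          apply mul_le_mul_of_nonneg_left h3
          have := Real.rpow_pos_of_pos ht0 (-(d:ℝ)/2)
          positivity
      _ = A * t ^ (-(d:ℝ)/2) * Real.exp (-b * s) := by rw [hAdef]; ring
  have hAt0 : 0 ≤ A * t ^ (-(d:ℝ)/2) := by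
    have := Real.rpow_pos_of_pos ht0 (-(d:ℝ)/2)
    positivity
  calc ∫⁻ x, ENNReal.ofReal (q x y * (1 + ‖x‖ ^ 2) ^ (-α))
      ≤ ∫⁻ x, ENNReal.ofReal (A * t ^ (-(d:ℝ)/2) * Real.exp (-b * ‖x - y‖ ^ 2)) :=
        lintegral_mono fun x => ENNReal.ofReal_le_ofReal (hpt x)
    _ = ∫⁻ x, ENNReal.ofReal (A * t ^ (-(d:ℝ)/2))
          * ENNReal.ofReal (Real.exp (-b * ‖x - y‖ ^ 2)) := by
        congr 1 with x
        rw [← ENNReal.ofReal_mul hAt0]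
    _ = ENNReal.ofReal (A * t ^ (-(d:ℝ)/2))
          * ∫⁻ x, ENNReal.ofReal (Real.exp (-b * ‖x - y‖ ^ 2)) :=
        lintegral_const_mul' _ _ ENNReal.ofReal_ne_top
    _ = ENNReal.ofReal (A * t ^ (-(d:ℝ)/2)) * ENNReal.ofReal ((π / b) ^ ((d:ℝ)/2)) := by
        rw [gauss_lintegral hb y]
    _ = ENNReal.ofReal (A * t ^ (-(d:ℝ)/2) * (π / b) ^ ((d:ℝ)/2)) :=
        (ENNReal.ofReal_mul hAt0).symm
    _ = ENNReal.ofReal (c₂ * 2 ^ α * K * (π / (C₂ / 2)) ^ ((d:ℝ)/2) * (1 + ‖y‖ ^ 2) ^ (-α)) := by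
        congr 1
        have hbase : π / b = (π / (C₂ / 2)) * t := by
          rw [hbdef]
          field_simp
        have hsplit : (π / b) ^ ((d:ℝ)/2) = (π / (C₂ / 2)) ^ ((d:ℝ)/2) * t ^ ((d:ℝ)/2) := by
          rw [hbase, Real.mul_rpow (by positivity) ht0.le]
        have hpow : t ^ (-(d:ℝ)/2) * t ^ ((d:ℝ)/2) = 1 := by
          rw [← Real.rpow_add ht0, show (-(d:ℝ)/2 + (d:ℝ)/2) = 0 by ring, Real.rpow_zero]
        rw [hsplit, hAdef]
        linear_combination (c₂ * 2 ^ α * K * (1 + ‖y‖ ^ 2) ^ (-α)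
          * (π / (C₂ / 2)) ^ ((d:ℝ)/2)) * hpow
end aux4
theorem stmt7 (d : ℕ) (α T : ℝ) (hα : (d : ℝ) / 2 < α) (hT : 0 < T)
    (ρ : EuclideanSpace ℝ (Fin d) → ℝ)
    (hρ : ∀ x, ρ x = (1 + ‖x‖ ^ 2) ^ (-α))
    (c₁ c₂ C₁ C₂ : ℝ) (hc₁ : 0 < c₁) (hc₂ : 0 < c₂) (hC₁ : 0 < C₁) (hC₂ : 0 < C₂)
    (p : ℝ → EuclideanSpace ℝ (Fin d) → EuclideanSpace ℝ (Fin d) → ℝ)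
    (hpmeas : ∀ t, Measurable (Function.uncurry (p t)))
    (hbounds : ∀ t ∈ Set.Ioc (0 : ℝ) T, ∀ x y,
      c₁ * t ^ (-(d : ℝ) / 2) * Real.exp (-C₁ * ‖x - y‖ ^ 2 / t) ≤ p t x y ∧
      p t x y ≤ c₂ * t ^ (-(d : ℝ) / 2) * Real.exp (-C₂ * ‖x - y‖ ^ 2 / t)) :
    ∃ c C : ℝ, 0 < c ∧ c ≤ C ∧
      ∀ ψ : EuclideanSpace ℝ (Fin d) → ℝ, Measurable ψ → (∀ y, 0 ≤ ψ y) →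
        ∀ t ∈ Set.Ioc (0 : ℝ) T,
          ENNReal.ofReal c * (∫⁻ y, ENNReal.ofReal (ψ y * ρ y))
            ≤ ∫⁻ x, ∫⁻ y, ENNReal.ofReal (ψ y * p t x y * ρ x) ∧
          (∫⁻ x, ∫⁻ y, ENNReal.ofReal (ψ y * p t x y * ρ x))
            ≤ ENNReal.ofReal C * ∫⁻ y, ENNReal.ofReal (ψ y * ρ y) := by
  have hα0 : 0 < α := lt_of_le_of_lt (by positivity) hα
  obtain ⟨CU, hCU, hupper⟩ := kernel_upper (d := d) hα0 hT hc₂ hC₂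
  set vB : ℝ := (volume (ball (0 : EuclideanSpace ℝ (Fin d)) 1)).toReal with hvBdef
  have hvB0 : 0 < vB :=
    ENNReal.toReal_pos (measure_ball_pos _ _ one_pos).ne' measure_ball_lt_top.ne
  set cL : ℝ := c₁ * Real.exp (-C₁) * (2 + 2 * T) ^ (-α) * vB with hcLdef
  have hcL0 : 0 < cL := by positivity
  refine ⟨min cL CU, max cL CU, lt_min hcL0 hCU, min_le_max, ?_⟩
  intro ψ hψm hψ0 t ht
  have hρm : Measurable ρ := by
    rw [show ρ = fun x => (1 + ‖x‖ ^ 2) ^ (-α) from funext hρ]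
    exact ((continuous_const.add (continuous_norm.pow 2)).rpow_const
      (fun x => Or.inl (by positivity : (1 + ‖x‖ ^ 2 : ℝ) ≠ 0))).measurable
  have hρ0 : ∀ x, 0 ≤ ρ x := fun x => by rw [hρ x]; positivity
  have hprodm : Measurable fun z : EuclideanSpace ℝ (Fin d) × EuclideanSpace ℝ (Fin d) =>
      ENNReal.ofReal (ψ z.2 * p t z.1 z.2 * ρ z.1) :=
    (((hψm.comp measurable_snd).mul (hpmeas t)).mul (hρm.comp measurable_fst)).ennreal_ofReal
  have hswap : (∫⁻ x, ∫⁻ y, ENNReal.ofReal (ψ y * p t x y * ρ x))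
      = ∫⁻ y, ∫⁻ x, ENNReal.ofReal (ψ y * p t x y * ρ x) :=
    lintegral_lintegral_swap hprodm.aemeasurable
  have hinner : ∀ y, (∫⁻ x, ENNReal.ofReal (ψ y * p t x y * ρ x))
      = ENNReal.ofReal (ψ y) * ∫⁻ x, ENNReal.ofReal (p t x y * ρ x) := by
    intro y
    rw [← lintegral_const_mul' _ _ ENNReal.ofReal_ne_top]
    apply lintegral_congr
    intro x
    rw [← ENNReal.ofReal_mul (hψ0 y), mul_assoc]
  have hρsimp : ∀ y : EuclideanSpace ℝ (Fin d),
      (fun x => ENNReal.ofReal (p t x y * ρ x))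
        = fun x => ENNReal.ofReal (p t x y * (1 + ‖x‖ ^ 2) ^ (-α)) := by
    intro y; funext x; rw [hρ x]
  have hJlow : ∀ y, ENNReal.ofReal (cL * ρ y)
      ≤ ∫⁻ x, ENNReal.ofReal (p t x y * ρ x) := by
    intro y
    rw [hρsimp y, hρ y, hcLdef]
    exact kernel_lower hα0 hT hc₁ hC₁ ht (hpmeas t) (fun x z => (hbounds t ht x z).1) y
  have hJup : ∀ y, (∫⁻ x, ENNReal.ofReal (p t x y * ρ x))
      ≤ ENNReal.ofReal (CU * ρ y) := by
    intro y
    rw [hρsimp y, hρ y]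
    exact hupper ht (p t) (fun x z => (hbounds t ht x z).2) y
  constructor
  · calc ENNReal.ofReal (min cL CU) * ∫⁻ y, ENNReal.ofReal (ψ y * ρ y)
        ≤ ENNReal.ofReal cL * ∫⁻ y, ENNReal.ofReal (ψ y * ρ y) :=
          mul_le_mul_left (ENNReal.ofReal_le_ofReal (min_le_left _ _)) _
      _ = ∫⁻ y, ENNReal.ofReal cL * ENNReal.ofReal (ψ y * ρ y) :=
          (lintegral_const_mul' _ _ ENNReal.ofReal_ne_top).symm
      _ ≤ ∫⁻ y, ENNReal.ofReal (ψ y) * ∫⁻ x, ENNReal.ofReal (p t x y * ρ x) := by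
          apply lintegral_mono
          intro y
          dsimp only
          have he : ENNReal.ofReal cL * ENNReal.ofReal (ψ y * ρ y)
              = ENNReal.ofReal (ψ y) * ENNReal.ofReal (cL * ρ y) := by
            rw [← ENNReal.ofReal_mul hcL0.le, ← ENNReal.ofReal_mul (hψ0 y)]
            congr 1
            ring
          rw [he]
          exact mul_le_mul_right (hJlow y) _
      _ = ∫⁻ y, ∫⁻ x, ENNReal.ofReal (ψ y * p t x y * ρ x) :=
          (lintegral_congr hinner).symm
      _ = ∫⁻ x, ∫⁻ y, ENNReal.ofReal (ψ y * p t x y * ρ x) := hswap.symm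
  · calc (∫⁻ x, ∫⁻ y, ENNReal.ofReal (ψ y * p t x y * ρ x))
        = ∫⁻ y, ∫⁻ x, ENNReal.ofReal (ψ y * p t x y * ρ x) := hswap
      _ = ∫⁻ y, ENNReal.ofReal (ψ y) * ∫⁻ x, ENNReal.ofReal (p t x y * ρ x) :=
          lintegral_congr hinner
      _ ≤ ∫⁻ y, ENNReal.ofReal CU * ENNReal.ofReal (ψ y * ρ y) := by
          apply lintegral_mono
          intro y
          dsimp only
          have he : ENNReal.ofReal CU * ENNReal.ofReal (ψ y * ρ y)
              = ENNReal.ofReal (ψ y) * ENNReal.ofReal (CU * ρ y) := by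
            rw [← ENNReal.ofReal_mul hCU.le, ← ENNReal.ofReal_mul (hψ0 y)]
            congr 1
            ring
          rw [he]
          exact mul_le_mul_right (hJup y) _
      _ = ENNReal.ofReal CU * ∫⁻ y, ENNReal.ofReal (ψ y * ρ y) :=
          lintegral_const_mul' _ _ ENNReal.ofReal_ne_top
      _ ≤ ENNReal.ofReal (max cL CU) * ∫⁻ y, ENNReal.ofReal (ψ y * ρ y) :=
          mul_le_mul_left (ENNReal.ofReal_le_ofReal (le_max_right _ _)) _
end
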